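/- Let D be a compact metric space, μ a finite Radon measure, and suppose each A_y (y ∈ D) is a zonoid in ℝ^n, with y ↦ A_y continuous in the Hausdorff metric. Then the Minkowski integral ∫_D A_y dμ(y) is a zonoid. -/

import Mathlib

open MeasureTheory Metric Set Filter
open scoped RealInnerProductSpace NNReal ENNReal Pointwise Topology

/-- The support function of a set `A ⊆ ℝⁿ`: `h_A(ξ) = sup_{ζ ∈ A} ⟨ζ, ξ⟩`. -/
noncomputable def suppFn {n : ℕ} (A : Set (EuclideanSpace ℝ (Fin n)))
    (ξ : EuclideanSpace ℝ (Fin n)) : ℝ :=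
  sSup ((fun ζ => ⟪ζ, ξ⟫) '' A)

/-- A zonotope: a translate of a finite Minkowski sum of segments `[0, vᵢ]`. -/
def IsZonotope {n : ℕ} (K : ConvexBody (EuclideanSpace ℝ (Fin n))) : Prop :=
  ∃ (N : ℕ) (v : Fin N → EuclideanSpace ℝ (Fin n)) (d : EuclideanSpace ℝ (Fin n)),
    (K : Set (EuclideanSpace ℝ (Fin n)))
      = {d} + ∑ i, segment ℝ (0 : EuclideanSpace ℝ (Fin n)) (v i)

/-- A zonoid: a Hausdorff limit of zonotopes. -/
def IsZonoid {n : ℕ} (K : ConvexBody (EuclideanSpace ℝ (Fin n))) : Prop :=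
  ∃ Z : ℕ → ConvexBody (EuclideanSpace ℝ (Fin n)),
    (∀ k, IsZonotope (Z k)) ∧ Tendsto Z atTop (𝓝 K)

variable {n : ℕ}
local notation "E" => EuclideanSpace ℝ (Fin n)

lemma suppFn_bddAbove (K : ConvexBody E) (ξ : E) :
    BddAbove ((fun ζ => ⟪ζ, ξ⟫) '' (K : Set E)) :=
  (K.isCompact.image (continuous_id.inner continuous_const)).bddAbove

lemma le_suppFn {K : ConvexBody E} {ζ : E} (hζ : ζ ∈ (K : Set E)) (ξ : E) :
    ⟪ζ, ξ⟫ ≤ suppFn (K : Set E) ξ :=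
  le_csSup (suppFn_bddAbove K ξ) (mem_image_of_mem _ hζ)

lemma suppFn_le {K : ConvexBody E} {ξ : E} {c : ℝ}
    (h : ∀ ζ ∈ (K : Set E), ⟪ζ, ξ⟫ ≤ c) : suppFn (K : Set E) ξ ≤ c :=
  csSup_le ((K.nonempty).image _) (by rintro x ⟨ζ, hζ, rfl⟩; exact h ζ hζ)

lemma suppFn_add (K L : ConvexBody E) (ξ : E) :
    suppFn ((K + L : ConvexBody E) : Set E) ξ
      = suppFn (K : Set E) ξ + suppFn (L : Set E) ξ := by
  have himg : (fun ζ => ⟪ζ, ξ⟫) '' ((K : Set E) + L)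
      = ((fun ζ => ⟪ζ, ξ⟫) '' (K : Set E)) + ((fun ζ => ⟪ζ, ξ⟫) '' (L : Set E)) := by
    ext x
    constructor
    · rintro ⟨ζ, ⟨a, ha, b, hb, rfl⟩, rfl⟩
      exact ⟨⟪a, ξ⟫, mem_image_of_mem _ ha, ⟪b, ξ⟫, mem_image_of_mem _ hb, (inner_add_left a b ξ).symm⟩
    · rintro ⟨-, ⟨a, ha, rfl⟩, -, ⟨b, hb, rfl⟩, rfl⟩
      exact ⟨a + b, ⟨a, ha, b, hb, rfl⟩, inner_add_left a b ξ⟩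
  rw [suppFn, ConvexBody.coe_add, himg,
    csSup_add (K.nonempty.image _) (suppFn_bddAbove K ξ) (L.nonempty.image _) (suppFn_bddAbove L ξ)]
  rfl

lemma suppFn_smul (c : ℝ) (hc : 0 ≤ c) (K : ConvexBody E) (ξ : E) :
    suppFn ((c • K : ConvexBody E) : Set E) ξ = c * suppFn (K : Set E) ξ := by
  have himg : (fun ζ => ⟪ζ, ξ⟫) '' (c • (K : Set E))
      = c • ((fun ζ => ⟪ζ, ξ⟫) '' (K : Set E)) := by
    ext x
    constructor
    · rintro ⟨-, ⟨a, ha, rfl⟩, rfl⟩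
      exact ⟨⟪a, ξ⟫, mem_image_of_mem _ ha, (real_inner_smul_left a ξ c).symm⟩
    · rintro ⟨-, ⟨a, ha, rfl⟩, rfl⟩
      exact ⟨c • a, smul_mem_smul_set ha, real_inner_smul_left a ξ c⟩
  rw [suppFn, ConvexBody.coe_smul, himg, Real.sSup_smul_of_nonneg hc, smul_eq_mul]
  rfl

/-- The closed ball of radius `ε ≥ 0` as a convex body. -/
noncomputable def ballBody (ε : ℝ) (hε : 0 ≤ ε) : ConvexBody E :=
  ⟨closedBall 0 ε, convex_closedBall 0 ε, isCompact_closedBall 0 ε,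
    ⟨0, mem_closedBall_self hε⟩⟩

lemma suppFn_ballBody (ε : ℝ) (hε : 0 ≤ ε) (ξ : E) :
    suppFn ((ballBody ε hε : ConvexBody E) : Set E) ξ = ε * ‖ξ‖ := by
  apply le_antisymm
  · refine suppFn_le fun ζ hζ => ?_
    calc ⟪ζ, ξ⟫ ≤ ‖ζ‖ * ‖ξ‖ := real_inner_le_norm ζ ξ
    _ ≤ ε * ‖ξ‖ := by
        have hζ' : ζ ∈ closedBall (0:E) ε := hζ
        have : ‖ζ‖ ≤ ε := by simpa [dist_zero_right] using hζ'
        exact mul_le_mul_of_nonneg_right this (norm_nonneg ξ)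
  · rcases eq_or_ne ξ 0 with rfl | hξ
    · simp only [norm_zero, mul_zero]
      have := le_suppFn (K := ballBody ε hε) (ζ := (0 : E)) (mem_closedBall_self hε) 0
      simpa using this
    · have hmem : (ε / ‖ξ‖) • ξ ∈ ((ballBody ε hε : ConvexBody E) : Set E) := by
        show (ε / ‖ξ‖) • ξ ∈ closedBall (0:E) ε
        rw [Metric.mem_closedBall, dist_zero_right, norm_smul]
        rw [Real.norm_eq_abs, abs_div, abs_of_nonneg hε, abs_of_nonneg (norm_nonneg ξ),
          div_mul_cancel₀ _ (norm_ne_zero_iff.2 hξ)]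
      have := le_suppFn hmem ξ
      calc ε * ‖ξ‖ = (ε / ‖ξ‖) * ⟪ξ, ξ⟫ := by
            rw [real_inner_self_eq_norm_mul_norm, div_mul_eq_mul_div, mul_div_assoc,
              mul_self_div_self]
      _ = ⟪(ε / ‖ξ‖) • ξ, ξ⟫ := (real_inner_smul_left ξ ξ _).symm
      _ ≤ _ := this

lemma subset_of_suppFn_le {K L : ConvexBody E}
    (h : ∀ ξ, suppFn (K : Set E) ξ ≤ suppFn (L : Set E) ξ) : (K : Set E) ⊆ L := by
  intro x hx
  by_contra hxL
  obtain ⟨f, u, hfL, hfx⟩ := geometric_hahn_banach_closed_point L.convex L.isClosed hxL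
  obtain ⟨ξ, rfl⟩ := (InnerProductSpace.toDual ℝ E).surjective f
  have h1 : suppFn (L : Set E) ξ ≤ u := by
    refine suppFn_le fun ζ hζ => ?_
    have h := hfL ζ hζ
    rw [InnerProductSpace.toDual_apply_apply] at h
    rw [real_inner_comm]
    exact h.le
  have h2 : u < ⟪x, ξ⟫ := by
    rw [real_inner_comm]
    have h := hfx
    rwa [InnerProductSpace.toDual_apply_apply] at h
  have h3 : ⟪x, ξ⟫ ≤ suppFn (K : Set E) ξ := le_suppFn hx ξ
  linarith [h ξ]

lemma suppFn_le_of_subset {K L : ConvexBody E} (h : (K : Set E) ⊆ L) (ξ : E) :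
    suppFn (K : Set E) ξ ≤ suppFn (L : Set E) ξ :=
  suppFn_le fun ζ hζ => le_suppFn (h hζ) ξ

lemma dist_le_of_suppFn {K L : ConvexBody E} {ε : ℝ} (hε : 0 ≤ ε)
    (h : ∀ ξ, |suppFn (K : Set E) ξ - suppFn (L : Set E) ξ| ≤ ε * ‖ξ‖) :
    dist K L ≤ ε := by
  have key : ∀ M N : ConvexBody E,
      (∀ ξ, suppFn (M : Set E) ξ ≤ suppFn (N : Set E) ξ + ε * ‖ξ‖) →
      ∀ x ∈ (M : Set E), ∃ y ∈ (N : Set E), dist x y ≤ ε := by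
    intro M N hMN x hx
    have hsub : (M : Set E) ⊆ (N + ballBody ε hε : ConvexBody E) := by
      refine subset_of_suppFn_le fun ξ => ?_
      rw [suppFn_add, suppFn_ballBody]
      exact hMN ξ
    obtain ⟨a, ha, b, hb, rfl⟩ := hsub hx
    refine ⟨a, ha, ?_⟩
    have hb' : b ∈ closedBall (0:E) ε := hb
    rw [dist_eq_norm, add_sub_cancel_left]
    simpa [dist_zero_right] using hb'
  rw [← ConvexBody.hausdorffDist_coe]
  refine hausdorffDist_le_of_mem_dist hε ?_ ?_
  · exact key K L (fun ξ => by have := h ξ; rw [abs_sub_le_iff] at this; linarith [this.1]) 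
  · exact key L K (fun ξ => by have := h ξ; rw [abs_sub_le_iff] at this; linarith [this.2]) 

lemma suppFn_le_add_dist (K L : ConvexBody E) (ξ : E) :
    suppFn (K : Set E) ξ ≤ suppFn (L : Set E) ξ + dist K L * ‖ξ‖ := by
  refine suppFn_le fun x hx => ?_
  have h1 : infDist x (L : Set E) ≤ dist K L := by
    rw [← ConvexBody.hausdorffDist_coe]
    exact infDist_le_hausdorffDist_of_mem hx ConvexBody.hausdorffEdist_ne_top
  obtain ⟨y, hy, hdy⟩ := L.isCompact.exists_infDist_eq_dist L.nonempty x
  have h2 : ⟪x - y, ξ⟫ ≤ dist K L * ‖ξ‖ := by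
    calc ⟪x - y, ξ⟫ ≤ ‖x - y‖ * ‖ξ‖ := real_inner_le_norm _ _
    _ ≤ dist K L * ‖ξ‖ := by
        refine mul_le_mul_of_nonneg_right ?_ (norm_nonneg ξ)
        rw [← dist_eq_norm]
        rw [hdy] at h1
        exact h1
  have h3 : ⟪x, ξ⟫ = ⟪y, ξ⟫ + ⟪x - y, ξ⟫ := by rw [← inner_add_left, add_sub_cancel]
  rw [h3]
  exact add_le_add (le_suppFn hy ξ) h2

lemma abs_suppFn_sub_le (K L : ConvexBody E) (ξ : E) :
    |suppFn (K : Set E) ξ - suppFn (L : Set E) ξ| ≤ dist K L * ‖ξ‖ := by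
  rw [abs_sub_le_iff]
  constructor
  · linarith [suppFn_le_add_dist K L ξ]
  · rw [dist_comm]
    linarith [suppFn_le_add_dist L K ξ]

lemma smul_set_add' (c : ℝ) (S T : Set E) : c • (S + T) = c • S + c • T := by
  ext x
  constructor
  · rintro ⟨-, ⟨a, ha, b, hb, rfl⟩, rfl⟩
    exact ⟨c • a, smul_mem_smul_set ha, c • b, smul_mem_smul_set hb, (smul_add c a b).symm⟩
  · rintro ⟨-, ⟨a, ha, rfl⟩, -, ⟨b, hb, rfl⟩, rfl⟩
    exact ⟨a + b, ⟨a, ha, b, hb, rfl⟩, smul_add c a b⟩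

lemma smul_set_sum' (c : ℝ) {ι : Type*} (s : Finset ι) (f : ι → Set E) :
    c • ∑ i ∈ s, f i = ∑ i ∈ s, c • f i := by
  classical
  induction s using Finset.cons_induction with
  | empty => simp [Set.smul_set_singleton]
  | cons a s ha ih => rw [Finset.sum_cons, Finset.sum_cons, smul_set_add', ih]

lemma smul_segment' (c : ℝ) (v : E) :
    c • segment ℝ (0 : E) v = segment ℝ (0 : E) (c • v) := by
  have h := image_segment (𝕜 := ℝ) (f := LinearMap.toAffineMap (c • (LinearMap.id : E →ₗ[ℝ] E))) (0 : E) v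
  simpa [Set.image_smul] using h

lemma IsZonotope.zero : IsZonotope (0 : ConvexBody E) := by
  refine ⟨0, ![], 0, ?_⟩
  have : ((0 : ConvexBody E) : Set E) = {0} := rfl
  simp [this]

lemma IsZonotope.add {K L : ConvexBody E} (hK : IsZonotope K) (hL : IsZonotope L) :
    IsZonotope (K + L) := by
  obtain ⟨N, v, d, hv⟩ := hK
  obtain ⟨M, w, e, hw⟩ := hL
  refine ⟨N + M, Fin.append v w, d + e, ?_⟩
  rw [ConvexBody.coe_add, hv, hw, Fin.sum_univ_add]
  simp only [Fin.append_left, Fin.append_right]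
  rw [← Set.singleton_add_singleton, add_add_add_comm]

lemma IsZonotope.smul (c : ℝ) {K : ConvexBody E} (hK : IsZonotope K) :
    IsZonotope (c • K) := by
  obtain ⟨N, v, d, hv⟩ := hK
  refine ⟨N, fun i => c • v i, c • d, ?_⟩
  rw [ConvexBody.coe_smul, hv, smul_set_add', Set.smul_set_singleton, smul_set_sum']
  congr 1
  exact Finset.sum_congr rfl fun i _ => smul_segment' c (v i)

lemma dist_add_add_le' (K K' L L' : ConvexBody E) :
    dist (K + L) (K' + L') ≤ dist K K' + dist L L' := by
  refine dist_le_of_suppFn (add_nonneg dist_nonneg dist_nonneg) fun ξ => ?_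
  rw [suppFn_add, suppFn_add, add_mul]
  have h1 := abs_suppFn_sub_le K K' ξ
  have h2 := abs_suppFn_sub_le L L' ξ
  calc |_| ≤ |suppFn (K : Set E) ξ - suppFn (K' : Set E) ξ|
      + |suppFn (L : Set E) ξ - suppFn (L' : Set E) ξ| := by
        rw [show suppFn (K : Set E) ξ + suppFn (L : Set E) ξ
          - (suppFn (K' : Set E) ξ + suppFn (L' : Set E) ξ)
          = (suppFn (K : Set E) ξ - suppFn (K' : Set E) ξ)
          + (suppFn (L : Set E) ξ - suppFn (L' : Set E) ξ) by ring]
        exact abs_add_le _ _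
  _ ≤ _ := add_le_add h1 h2

lemma dist_smul_smul_le' (c : ℝ) (hc : 0 ≤ c) (K L : ConvexBody E) :
    dist (c • K) (c • L) ≤ c * dist K L := by
  refine dist_le_of_suppFn (mul_nonneg hc dist_nonneg) fun ξ => ?_
  rw [suppFn_smul c hc, suppFn_smul c hc, ← mul_sub, abs_mul, abs_of_nonneg hc, mul_assoc]
  exact mul_le_mul_of_nonneg_left (abs_suppFn_sub_le K L ξ) hc

lemma IsZonoid.zero : IsZonoid (0 : ConvexBody E) :=
  ⟨fun _ => 0, fun _ => IsZonotope.zero, tendsto_const_nhds⟩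

lemma IsZonoid.add {K L : ConvexBody E} (hK : IsZonoid K) (hL : IsZonoid L) :
    IsZonoid (K + L) := by
  obtain ⟨Z, hZ, hZt⟩ := hK
  obtain ⟨W, hW, hWt⟩ := hL
  refine ⟨fun k => Z k + W k, fun k => (hZ k).add (hW k), ?_⟩
  rw [tendsto_iff_dist_tendsto_zero]
  refine squeeze_zero (fun k => dist_nonneg) (fun k => dist_add_add_le' _ K _ L) ?_
  have := (tendsto_iff_dist_tendsto_zero.1 hZt).add (tendsto_iff_dist_tendsto_zero.1 hWt)
  simpa using this

lemma IsZonoid.smul (c : ℝ) (hc : 0 ≤ c) {K : ConvexBody E} (hK : IsZonoid K) :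
    IsZonoid (c • K) := by
  obtain ⟨Z, hZ, hZt⟩ := hK
  refine ⟨fun k => c • Z k, fun k => (hZ k).smul c, ?_⟩
  rw [tendsto_iff_dist_tendsto_zero]
  refine squeeze_zero (fun k => dist_nonneg) (fun k => dist_smul_smul_le' c hc _ K) ?_
  have := (tendsto_iff_dist_tendsto_zero.1 hZt).const_mul c
  simpa using this

lemma isZonoid_of_tendsto {KS : ℕ → ConvexBody E} {K : ConvexBody E}
    (h : ∀ j, IsZonoid (KS j)) (ht : Tendsto KS atTop (𝓝 K)) : IsZonoid K := by
  have hch : ∀ j : ℕ, ∃ W, IsZonotope W ∧ dist W (KS j) ≤ 1 / (j + 1 : ℝ) := by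
    intro j
    obtain ⟨Z, hZ, hZt⟩ := h j
    have hpos : (0:ℝ) < 1 / (j + 1 : ℝ) := by positivity
    obtain ⟨N, hN⟩ := (Metric.tendsto_atTop.1 hZt) _ hpos
    exact ⟨Z N, hZ N, (hN N le_rfl).le⟩
  choose W hW1 hW2 using hch
  refine ⟨W, hW1, ?_⟩
  rw [tendsto_iff_dist_tendsto_zero]
  refine squeeze_zero (fun k => dist_nonneg)
    (fun j => (dist_triangle (W j) (KS j) K).trans (add_le_add (hW2 j) le_rfl)) ?_
  have := tendsto_one_div_add_atTop_nhds_zero_nat.add (tendsto_iff_dist_tendsto_zero.1 ht)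
  simpa using this

lemma isZonoid_sum {ι : Type*} (s : Finset ι) (f : ι → ConvexBody E)
    (h : ∀ i ∈ s, IsZonoid (f i)) : IsZonoid (∑ i ∈ s, f i) := by
  classical
  induction s using Finset.cons_induction with
  | empty => simpa using IsZonoid.zero
  | cons a s ha ih =>
      rw [Finset.sum_cons]
      exact (h a (Finset.mem_cons_self a s)).add
        (ih fun i hi => h i (Finset.mem_cons_of_mem hi))

lemma suppFn_zero' (ξ : E) : suppFn ((0 : ConvexBody E) : Set E) ξ = 0 := by
  have : ((0 : ConvexBody E) : Set E) = {0} := rfl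
  rw [suppFn, this, Set.image_singleton, inner_zero_left, csSup_singleton]

lemma suppFn_finsetSum {ι : Type*} (s : Finset ι) (f : ι → ConvexBody E) (ξ : E) :
    suppFn ((∑ i ∈ s, f i : ConvexBody E) : Set E) ξ = ∑ i ∈ s, suppFn ((f i : Set E)) ξ := by
  classical
  induction s using Finset.cons_induction with
  | empty => simpa using suppFn_zero' ξ
  | cons a s ha ih => rw [Finset.sum_cons, Finset.sum_cons, suppFn_add, ih]

lemma suppFn_lipschitz (ξ : E) :
    LipschitzWith ‖ξ‖₊ (fun L : ConvexBody E => suppFn (L : Set E) ξ) := by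
  refine LipschitzWith.of_dist_le_mul fun K L => ?_
  rw [Real.dist_eq, coe_nnnorm, mul_comm]
  exact abs_suppFn_sub_le K L ξ

lemma exists_zonoid_close {D : Type*} [MetricSpace D]
    [CompactSpace D] [MeasurableSpace D] [BorelSpace D]
    (μ : Measure D) [IsFiniteMeasure μ]
    (A : D → ConvexBody E) (hA : Continuous A)
    (hzon : ∀ y, IsZonoid (A y)) (K : ConvexBody E)
    (hK : ∀ ξ, suppFn (K : Set E) ξ = ∫ y, suppFn (A y : Set E) ξ ∂μ)
    {ε : ℝ} (hε : 0 < ε) : ∃ Z, IsZonoid Z ∧ dist Z K ≤ ε := by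
  classical
  set C := (μ Set.univ).toReal with hCdef
  have hC0 : 0 ≤ C := ENNReal.toReal_nonneg
  set η := ε / (C + 1) with hηdef
  have hη0 : 0 < η := div_pos hε (by linarith)
  have hu : UniformContinuous A := CompactSpace.uniformContinuous_of_continuous hA
  obtain ⟨δ, hδ0, hδ⟩ := Metric.uniformContinuous_iff.1 hu η hη0
  obtain ⟨t, ht⟩ := isCompact_univ.elim_finite_subcover (fun y : D => Metric.ball y δ)
    (fun y => isOpen_ball) (fun x _ => Set.mem_iUnion.2 ⟨x, mem_ball_self hδ0⟩)
  set m := t.card with hmdef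
  set g : Fin m → D := fun i => (t.equivFin.symm i : D) with hgdef
  set f : ℕ → Set D := fun k => if h : k < m then Metric.ball (g ⟨k, h⟩) δ else ∅ with hfdef
  set T : Fin m → Set D := fun i => disjointed f i with hTdef
  have hfi : ∀ i : Fin m, f (i : ℕ) = Metric.ball (g i) δ := by
    intro i
    simp [hfdef, i.isLt]
  have hTf : ∀ i : Fin m, T i ⊆ Metric.ball (g i) δ := by
    intro i
    rw [hTdef, ← hfi i]
    exact disjointed_subset f i
  have hfm : ∀ k, MeasurableSet (f k) := by
    intro k
    by_cases h : k < m
    · rw [show f k = Metric.ball (g ⟨k, h⟩) δ from by simp only [hfdef]; exact dif_pos h]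
      exact measurableSet_ball
    · rw [show f k = ∅ from by simp only [hfdef]; exact dif_neg h]
      exact MeasurableSet.empty
  have hTm : ∀ i : Fin m, MeasurableSet (T i) := fun i => MeasurableSet.disjointed hfm _
  have hTd : Pairwise (Function.onFun Disjoint T) := fun i j hij =>
    disjoint_disjointed f (fun h => hij (Fin.ext h))
  have hcov : ⋃ i : Fin m, T i = Set.univ := by
    apply Set.eq_univ_of_univ_subset
    intro x _
    have hx : x ∈ ⋃ y ∈ t, Metric.ball y δ := ht (Set.mem_univ x)
    obtain ⟨y, hy, hxy⟩ := Set.mem_iUnion₂.1 hx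
    obtain ⟨i, rfl⟩ : ∃ i, g i = y := ⟨t.equivFin ⟨y, hy⟩, by simp [hgdef]⟩
    have hxf : x ∈ ⋃ k : ℕ, f k := Set.mem_iUnion.2 ⟨(i : ℕ), by rw [hfi i]; exact hxy⟩
    rw [← iUnion_disjointed] at hxf
    obtain ⟨k, hk⟩ := Set.mem_iUnion.1 hxf
    have hkm : k < m := by
      by_contra hkm
      have hxk : x ∈ f k := disjointed_subset f k hk
      rw [show f k = ∅ from by simp only [hfdef]; exact dif_neg hkm] at hxk
      exact absurd hxk (Set.notMem_empty x)
    exact Set.mem_iUnion.2 ⟨⟨k, hkm⟩, hk⟩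
  set Z : ConvexBody E := ∑ i : Fin m, (μ (T i)).toReal • A (g i) with hZdef
  have hZzon : IsZonoid Z :=
    isZonoid_sum Finset.univ _ fun i _ => IsZonoid.smul _ ENNReal.toReal_nonneg (hzon (g i))
  have hcont : ∀ ξ : E, Continuous fun y => suppFn ((A y : Set E)) ξ :=
    fun ξ => ((suppFn_lipschitz ξ).continuous).comp hA
  have hint : ∀ ξ : E, Integrable (fun y => suppFn ((A y : Set E)) ξ) μ := fun ξ =>
    (hcont ξ).integrable_of_hasCompactSupport (isClosed_tsupport _).isCompact
  refine ⟨Z, hZzon, dist_le_of_suppFn hε.le fun ξ => ?_⟩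
  have hsplit : ∫ y, suppFn ((A y : Set E)) ξ ∂μ
      = ∑ i : Fin m, ∫ y in T i, suppFn ((A y : Set E)) ξ ∂μ := by
    have hbu : ⋃ i ∈ (Finset.univ : Finset (Fin m)), T i = Set.univ := by
      rw [← hcov]; simp
    rw [← setIntegral_univ, ← hbu]
    exact integral_biUnion_finset Finset.univ (fun i _ => hTm i)
      (fun i _ j _ hij => hTd hij) (fun i _ => (hint ξ).integrableOn)
  have hmeas_sum : ∑ i : Fin m, (μ (T i)).toReal ≤ C := by
    have h1 : ∑ i : Fin m, μ (T i) = μ Set.univ := by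
      rw [← hcov, measure_iUnion hTd hTm, tsum_fintype]
    rw [hCdef, ← h1, ← ENNReal.toReal_sum (fun i _ => measure_ne_top μ _)]
  have hpiece : ∀ i : Fin m,
      |suppFn (((μ (T i)).toReal • A (g i) : ConvexBody E) : Set E) ξ
        - ∫ y in T i, suppFn ((A y : Set E)) ξ ∂μ| ≤ (μ (T i)).toReal * (η * ‖ξ‖) := by
    intro i
    rw [suppFn_smul _ ENNReal.toReal_nonneg]
    have heq : (μ (T i)).toReal * suppFn ((A (g i) : Set E)) ξ
        - ∫ y in T i, suppFn ((A y : Set E)) ξ ∂μ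
        = - ∫ y in T i, (suppFn ((A y : Set E)) ξ - suppFn ((A (g i) : Set E)) ξ) ∂μ := by
      rw [integral_sub ((hint ξ).integrableOn) (integrableOn_const (measure_ne_top μ _)),
        setIntegral_const, smul_eq_mul, measureReal_def]
      ring
    rw [heq, abs_neg, ← Real.norm_eq_abs]
    have hb : ∀ y ∈ T i, ‖suppFn ((A y : Set E)) ξ - suppFn ((A (g i) : Set E)) ξ‖ ≤ η * ‖ξ‖ := by
      intro y hy
      have hyb : dist y (g i) < δ := mem_ball.1 (hTf i hy)
      have hAd : dist (A y) (A (g i)) < η := hδ hyb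
      rw [Real.norm_eq_abs]
      calc |suppFn ((A y : Set E)) ξ - suppFn ((A (g i) : Set E)) ξ|
          ≤ dist (A y) (A (g i)) * ‖ξ‖ := abs_suppFn_sub_le _ _ ξ
      _ ≤ η * ‖ξ‖ := mul_le_mul_of_nonneg_right hAd.le (norm_nonneg ξ)
    have hbound := norm_setIntegral_le_of_norm_le_const (μ := μ) (s := T i)
      (C := η * ‖ξ‖) (measure_lt_top μ _) hb
    calc ‖∫ y in T i, (suppFn ((A y : Set E)) ξ - suppFn ((A (g i) : Set E)) ξ) ∂μ‖
        ≤ (η * ‖ξ‖) * (μ (T i)).toReal := hbound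
    _ = (μ (T i)).toReal * (η * ‖ξ‖) := mul_comm _ _
  rw [hK ξ, hsplit, hZdef, suppFn_finsetSum]
  calc |∑ i : Fin m, suppFn (((μ (T i)).toReal • A (g i) : ConvexBody E) : Set E) ξ
      - ∑ i : Fin m, ∫ y in T i, suppFn ((A y : Set E)) ξ ∂μ|
      = |∑ i : Fin m, (suppFn (((μ (T i)).toReal • A (g i) : ConvexBody E) : Set E) ξ
          - ∫ y in T i, suppFn ((A y : Set E)) ξ ∂μ)| := by rw [Finset.sum_sub_distrib]
  _ ≤ ∑ i : Fin m, |suppFn (((μ (T i)).toReal • A (g i) : ConvexBody E) : Set E) ξ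
          - ∫ y in T i, suppFn ((A y : Set E)) ξ ∂μ| := Finset.abs_sum_le_sum_abs _ _
  _ ≤ ∑ i : Fin m, (μ (T i)).toReal * (η * ‖ξ‖) := Finset.sum_le_sum fun i _ => hpiece i
  _ = (∑ i : Fin m, (μ (T i)).toReal) * (η * ‖ξ‖) := (Finset.sum_mul _ _ _).symm
  _ ≤ C * (η * ‖ξ‖) := mul_le_mul_of_nonneg_right hmeas_sum (by positivity)
  _ ≤ ε * ‖ξ‖ := by
      rw [← mul_assoc]
      refine mul_le_mul_of_nonneg_right ?_ (norm_nonneg ξ)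
      rw [hηdef, ← mul_div_assoc, div_le_iff₀ (by linarith : (0:ℝ) < C + 1)]
      nlinarith

/-- The Minkowski integral of a continuous family of zonoids is a zonoid. -/
theorem minkowski_integral_of_zonoids_is_zonoid {n : ℕ} {D : Type*} [MetricSpace D]
    [CompactSpace D] [MeasurableSpace D] [BorelSpace D]
    (μ : Measure D) [IsFiniteMeasure μ]
    (A : D → ConvexBody (EuclideanSpace ℝ (Fin n))) (hA : Continuous A)
    (hzon : ∀ y, IsZonoid (A y))
    (K : ConvexBody (EuclideanSpace ℝ (Fin n)))
    (hK : ∀ ξ, suppFn (K : Set (EuclideanSpace ℝ (Fin n))) ξ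
      = ∫ y, suppFn (A y : Set (EuclideanSpace ℝ (Fin n))) ξ ∂μ) :
    IsZonoid K := by
  have hstep : ∀ j : ℕ, ∃ Z, IsZonoid Z ∧ dist Z K ≤ 1 / (j + 1 : ℝ) := fun j =>
    exists_zonoid_close μ A hA hzon K hK (by positivity)
  choose W hW1 hW2 using hstep
  refine isZonoid_of_tendsto hW1 ?_
  rw [tendsto_iff_dist_tendsto_zero]
  exact squeeze_zero (fun _ => dist_nonneg) hW2 tendsto_one_div_add_atTop_nhds_zero_nat
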